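/- Let j_1 < j_2 < … < j_d be positive integers, at least one of which is odd, and let S ⊆ ℝ^n be a nonempty set with the property that for all x ∈ S and all y ∈ ℝ^n, if p_{j_l}(y) = p_{j_l}(x) for every l ∈ {1,…,d}, then y ∈ S (this holds in particular when S is a semi-algebraic set described by symmetric {j_1,…,j_d}-sparse polynomials). Set ℓ := min{j_d, 2d+1}. Then S contains a point with at most ℓ distinct coordinates, i.e., S ∩ A_ℓ ≠ ∅. -/

import Mathlib

open Polynomial Set

section Auxiliary

/-- Rolle for finsets of roots of a polynomial: there is a finset of roots of the
derivative, each lying strictly between two roots in `T`, of cardinality ≥ `T.card - 1`. -/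
lemma rolle_finset (q : ℝ[X]) : ∀ (N : ℕ) (T : Finset ℝ), T.card = N →
    (∀ r ∈ T, q.eval r = 0) →
    ∃ T' : Finset ℝ, T.card ≤ T'.card + 1 ∧
      (∀ c ∈ T', q.derivative.eval c = 0) ∧ (∀ c ∈ T', ∃ a ∈ T, a < c) := by
  intro N
  induction N using Nat.strong_induction_on with
  | _ N ih =>
    intro T hcard hroots
    rcases le_or_gt T.card 1 with h1 | h1
    · exact ⟨∅, by simpa using h1, by simp, by simp⟩
    · have hne : T.Nonempty := Finset.card_pos.mp (by omega)
      set a := T.min' hne with ha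
      set T₂ := T.erase a with hT₂
      have haT : a ∈ T := T.min'_mem hne
      have hT₂card : T₂.card = T.card - 1 := Finset.card_erase_of_mem haT
      have hT₂ne : T₂.Nonempty := Finset.card_pos.mp (by omega)
      set b := T₂.min' hT₂ne with hb
      have hbT₂ : b ∈ T₂ := T₂.min'_mem hT₂ne
      have hbT : b ∈ T := Finset.mem_of_mem_erase hbT₂
      have hab : a < b := by
        rcases lt_or_eq_of_le (T.min'_le b hbT) with h | h
        · exact h
        · rw [← h] at hbT₂; exact absurd hbT₂ (Finset.notMem_erase a T)
      obtain ⟨c, hcmem, hc⟩ := exists_deriv_eq_zero (f := fun x => q.eval x) hab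
        q.continuousOn (by simp only [hroots a haT, hroots b hbT])
      rw [Polynomial.deriv] at hc
      obtain ⟨T₂', h2card, h2root, h2between⟩ := ih T₂.card (by omega) T₂ rfl
        (fun r hr => hroots r (Finset.mem_of_mem_erase hr))
      have hcnot : c ∉ T₂' := by
        intro hcmem'
        obtain ⟨a', ha'T₂, ha'c⟩ := h2between c hcmem'
        have : b ≤ a' := T₂.min'_le a' ha'T₂
        have : c < c := lt_trans hcmem.2 (lt_of_le_of_lt this ha'c)
        exact lt_irrefl _ this
      refine ⟨insert c T₂', ?_, ?_, ?_⟩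
      · rw [Finset.card_insert_of_notMem hcnot]; omega
      · intro c' hc'
        rcases Finset.mem_insert.mp hc' with rfl | h
        · exact hc
        · exact h2root c' h
      · intro c' hc'
        rcases Finset.mem_insert.mp hc' with rfl | h
        · exact ⟨a, haT, hcmem.1⟩
        · obtain ⟨a', ha', hlt⟩ := h2between c' h
          exact ⟨a', Finset.mem_of_mem_erase ha', hlt⟩

/-- A nonzero real polynomial with at most `s` monomials has at most `2s - 2`
distinct nonzero roots. -/
lemma descartes_nonzero : ∀ (s : ℕ) (q : ℝ[X]), q ≠ 0 → q.support.card ≤ s →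
    ∀ T : Finset ℝ, (∀ r ∈ T, q.eval r = 0 ∧ r ≠ 0) → T.card ≤ 2 * s - 2 := by
  intro s
  induction s with
  | zero =>
    intro q hq hs T hT
    exact absurd (Polynomial.support_eq_empty.mp (Finset.card_eq_zero.mp (Nat.le_zero.mp hs)))
      hq
  | succ s ih =>
    intro q hq hs T hT
    rcases T.eq_empty_or_nonempty with rfl | hTne
    · simp
    -- factor out the trailing power of X
    set a := q.natTrailingDegree with ha
    obtain ⟨g, hg⟩ : X ^ a ∣ q :=
      Polynomial.X_pow_dvd_iff.mpr fun d hd => Polynomial.coeff_eq_zero_of_lt_natTrailingDegree hd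
    have hg0 : g.coeff 0 ≠ 0 := by
      have h1 : q.coeff a ≠ 0 := Polynomial.trailingCoeff_eq_zero.not.mpr hq
      have h2 : (X ^ a * g).coeff (0 + a) = g.coeff 0 := Polynomial.coeff_X_pow_mul g a 0
      rw [Nat.zero_add] at h2
      rw [hg] at h1
      rwa [h2] at h1
    have hgne : g ≠ 0 := fun h => hg0 (by simp [h])
    -- T consists of roots of g
    have hTg : ∀ r ∈ T, g.eval r = 0 := by
      intro r hr
      have h1 := (hT r hr).1
      have h2 := (hT r hr).2
      rw [hg, Polynomial.eval_mul, Polynomial.eval_pow, Polynomial.eval_X] at h1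
      exact (mul_eq_zero.mp h1).resolve_left (pow_ne_zero a h2)
    -- support of g is at most that of q
    have hgsupp : g.support.card ≤ s + 1 := by
      refine le_trans (Finset.card_le_card_of_injOn (fun e => e + a) ?_ ?_) hs
      · intro e he
        simp only [Finset.mem_coe, Polynomial.mem_support_iff] at he ⊢
        rwa [hg, Polynomial.coeff_X_pow_mul g a e]
      · intro e₁ _ e₂ _ h; simpa using h
    -- 0 is in the support of g
    have h0supp : (0 : ℕ) ∈ g.support := Polynomial.mem_support_iff.mpr hg0
    -- derivative of g is nonzero
    have hg' : g.derivative ≠ 0 := by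
      intro h
      have hdeg : g.natDegree = 0 := Polynomial.natDegree_eq_zero_of_derivative_eq_zero h
      obtain ⟨r, hr⟩ := hTne
      have := hTg r hr
      rw [Polynomial.eq_C_of_natDegree_eq_zero hdeg] at this
      rw [Polynomial.eval_C] at this
      exact hg0 this
    -- support of derivative of g
    have hg'supp : g.derivative.support.card ≤ s := by
      have hsub : g.derivative.support ⊆ (g.support.erase 0).image (fun e => e - 1) := by
        intro e he
        rw [Polynomial.mem_support_iff, Polynomial.coeff_derivative] at he
        have : g.coeff (e + 1) ≠ 0 := fun h => he (by simp [h])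
        refine Finset.mem_image.mpr ⟨e + 1, Finset.mem_erase.mpr ⟨by omega,
          Polynomial.mem_support_iff.mpr this⟩, by omega⟩
      calc g.derivative.support.card ≤ ((g.support.erase 0).image (fun e => e - 1)).card :=
            Finset.card_le_card hsub
        _ ≤ (g.support.erase 0).card := Finset.card_image_le
        _ = g.support.card - 1 := Finset.card_erase_of_mem h0supp
        _ ≤ s := by omega
    -- Rolle
    obtain ⟨T', hTcard, hT'root, _⟩ := rolle_finset g T.card T rfl hTg
    have hT'card : T'.card ≤ (T'.filter (fun x => x ≠ 0)).card + 1 := by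
      have hsplit := Finset.card_filter_add_card_filter_not (s := T')
        (p := fun x => x ≠ 0)
      have h01 : (T'.filter (fun x => ¬ x ≠ 0)).card ≤ 1 := by
        refine Finset.card_le_one.mpr fun x hx y hy => ?_
        simp only [Finset.mem_filter, not_not] at hx hy
        rw [hx.2, hy.2]
      omega
    have hT''root : ∀ r ∈ T'.filter (fun x => x ≠ 0), g.derivative.eval r = 0 ∧ r ≠ 0 := by
      intro r hr
      rw [Finset.mem_filter] at hr
      exact ⟨hT'root r hr.1, hr.2⟩
    have hmain := ih g.derivative hg' hg'supp (T'.filter (fun x => x ≠ 0)) hT''root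
    have hs1 : 1 ≤ s := by
      by_contra h
      push_neg at h
      interval_cases s
      · -- g.derivative.support.card ≤ 0 means derivative = 0
        exact hg' (Polynomial.support_eq_empty.mp (Finset.card_eq_zero.mp
          (Nat.le_zero.mp hg'supp)))
    omega

lemma hasStrictFDerivAt_powSum {n : ℕ} (k : ℕ) (y : Fin n → ℝ) :
    HasStrictFDerivAt (fun z : Fin n → ℝ => ∑ i, z i ^ k)
      (∑ i, ((k : ℝ) * y i ^ (k - 1)) •
        ContinuousLinearMap.proj (R := ℝ) (φ := fun _ : Fin n => ℝ) i) y := by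
  refine HasStrictFDerivAt.fun_sum fun i _ => ?_
  have hp : HasStrictFDerivAt (fun z : Fin n → ℝ => z i)
      (ContinuousLinearMap.proj (R := ℝ) (φ := fun _ : Fin n => ℝ) i) y :=
    hasStrictFDerivAt_apply i y
  exact (hasStrictDerivAt_pow k (y i)).comp_hasStrictFDerivAt y hp

lemma clm_sum_apply {n : ℕ} (a : Fin n → ℝ) (v : Fin n → ℝ) :
    (∑ i, a i • ContinuousLinearMap.proj (R := ℝ) (φ := fun _ : Fin n => ℝ) i) v
      = ∑ i, a i * v i := by
  simp [ContinuousLinearMap.sum_apply, ContinuousLinearMap.smul_apply]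

/-- A closed set on which an even power sum is bounded is compact. -/
lemma isCompact_of_even_powSum_bounded {n : ℕ} (M : ℕ) (hM : Even M) (hM0 : 0 < M) (B : ℝ)
    (F : Set (Fin n → ℝ)) (hFc : IsClosed F) (hb : ∀ z ∈ F, ∑ i, z i ^ M ≤ B) :
    IsCompact F := by
  set R := max 1 B with hR
  have hsub : F ⊆ Set.pi Set.univ (fun _ : Fin n => Set.Icc (-R) R) := by
    intro z hz i _
    have hterm : z i ^ M ≤ B := by
      refine le_trans ?_ (hb z hz)
      refine Finset.single_le_sum (f := fun i => z i ^ M) (fun i _ => hM.pow_nonneg _)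
        (Finset.mem_univ i)
    have habs : |z i| ≤ R := by
      by_contra h
      push_neg at h
      have h1 : (1 : ℝ) ≤ |z i| := le_trans (le_max_left 1 B) h.le
      have h2 : |z i| ≤ |z i| ^ M := le_self_pow₀ h1 (by omega)
      rw [← hM.pow_abs] at hterm
      have : |z i| ≤ B := le_trans h2 hterm
      exact absurd (le_trans this (le_max_right 1 B)) (not_le.mpr h)
    exact abs_le.mp habs
  exact (isCompact_univ_pi fun _ => isCompact_Icc).of_isClosed_subset hFc hsub

lemma continuous_powSum {n : ℕ} (k : ℕ) :
    Continuous (fun z : Fin n → ℝ => ∑ i, z i ^ k) :=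
  continuous_finset_sum _ fun i _ => (continuous_apply i).pow k

/-- A finset of roots of a nonzero real polynomial with at most `s` monomials has at
most `min (natDegree) (2s-1)` elements. -/
lemma root_finset_card_le (q : ℝ[X]) (hq : q ≠ 0) (s : ℕ) (hs : q.support.card ≤ s)
    (T : Finset ℝ) (hT : ∀ r ∈ T, q.eval r = 0) :
    T.card ≤ q.natDegree ∧ T.card ≤ 2 * s - 1 := by
  constructor
  · have hsub : T ⊆ q.roots.toFinset := by
      intro r hr
      rw [Multiset.mem_toFinset, Polynomial.mem_roots']
      exact ⟨hq, hT r hr⟩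
    calc T.card ≤ q.roots.toFinset.card := Finset.card_le_card hsub
      _ ≤ Multiset.card q.roots := q.roots.toFinset_card_le
      _ ≤ q.natDegree := q.card_roots'
  · have hs1 : 1 ≤ s := by
      have : q.support.Nonempty := Polynomial.support_nonempty.mpr hq
      have := Finset.card_pos.mpr this
      omega
    have hnz := descartes_nonzero s q hq hs (T.filter (fun r => r ≠ 0))
      (fun r hr => ⟨hT r (Finset.mem_of_mem_filter r hr), (Finset.mem_filter.mp hr).2⟩)
    have hsplit := Finset.card_filter_add_card_filter_not (s := T)
      (p := fun x => x ≠ 0)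
    have h01 : (T.filter (fun x => ¬ x ≠ 0)).card ≤ 1 := by
      refine Finset.card_le_one.mpr fun x hx y hy => ?_
      simp only [Finset.mem_filter, not_not] at hx hy
      rw [hx.2, hy.2]
    omega

end Auxiliary

/-- If `S ⊆ ℝ^n` is nonempty and closed under the equivalence of sharing the values of
the power sums `p_{j_1},…,p_{j_d}` for positive exponents `j_1 < … < j_d`, at least one
of which is odd, then `S` contains a point with at most `ℓ := min (j_d) (2d+1)` distinct
coordinates. -/
lemma clm_powSum_apply_single {n : ℕ} (a : Fin n → ℝ) (i₀ : Fin n) :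
    (∑ i, a i • ContinuousLinearMap.proj (R := ℝ) (φ := fun _ : Fin n => ℝ) i)
      (Pi.single i₀ 1) = a i₀ := by
  rw [ContinuousLinearMap.sum_apply]
  rw [Finset.sum_eq_single i₀]
  · simp
  · intro b _ hb
    simp [Pi.single_apply, hb]
  · intro h; exact absurd (Finset.mem_univ i₀) h

theorem odd_sparse_set_meets_Al (n d : ℕ) (hd : 0 < d) (j : Fin d → ℕ)
    (hmono : StrictMono j) (hpos : ∀ l, 0 < j l) (hodd : ∃ l, Odd (j l))
    (S : Set (Fin n → ℝ)) (hS : S.Nonempty)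
    (hclosed : ∀ x ∈ S, ∀ y : Fin n → ℝ,
      (∀ l : Fin d, ∑ i, y i ^ j l = ∑ i, x i ^ j l) → y ∈ S) :
    ∃ y ∈ S, (Set.range y).ncard ≤ min (j ⟨d - 1, by omega⟩) (2 * d + 1) := by
  obtain ⟨x, hx⟩ := hS
  set J := j ⟨d - 1, by omega⟩ with hJ
  -- basic facts about j
  have hjd0 : ∀ k (h : k < d), k + 1 ≤ j ⟨k, h⟩ := by
    intro k
    induction k with
    | zero => intro h; have := hpos ⟨0, h⟩; omega
    | succ k ihk =>
      intro h
      have hk : k < d := by omega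
      have h1 := hmono (show (⟨k, hk⟩ : Fin d) < ⟨k + 1, h⟩ from by simp [Fin.lt_def])
      have h2 := ihk hk
      omega
  have hjd : ∀ l : Fin d, (l : ℕ) + 1 ≤ j l := by
    intro l
    have := hjd0 l.val l.isLt
    simpa using this
  have hjJ : ∀ l, j l ≤ J := by
    intro l
    exact hmono.monotone (by
      rcases Nat.lt_or_ge (l : ℕ) (d - 1) with h | h
      · exact le_of_lt (by exact (Fin.lt_def.mpr (by simpa using h)))
      · have : (l : ℕ) = d - 1 := by have := l.isLt; omega
        exact le_of_eq (Fin.ext this))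
  have hJd : d ≤ J := by
    have := hjd ⟨d - 1, by omega⟩
    simp only at this
    omega
  -- the fiber
  set F : Set (Fin n → ℝ) := {z | ∀ l, ∑ i, z i ^ j l = ∑ i, x i ^ j l} with hF
  have hxF : x ∈ F := fun l => rfl
  have hFc : IsClosed F := by
    have : F = ⋂ l, {z : Fin n → ℝ | ∑ i, z i ^ j l = ∑ i, x i ^ j l} := by
      ext z; simp [hF, Set.mem_iInter]
    rw [this]
    exact isClosed_iInter fun l => isClosed_eq (continuous_powSum (j l)) continuous_const
  -- choose an exponent m and a minimizer of p_m on F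
  have hkey : ∃ m : ℕ, 0 < m ∧ (∀ l, j l ≠ m) ∧ m ≤ J + 1 ∧
      ∃ y ∈ F, IsMinOn (fun z : Fin n → ℝ => ∑ i, z i ^ m) F y := by
    by_cases hev : ∃ l₀, Even (j l₀)
    · obtain ⟨l₀, hl₀⟩ := hev
      have hFcompact : IsCompact F :=
        isCompact_of_even_powSum_bounded (j l₀) hl₀ (hpos l₀) (∑ i, x i ^ j l₀) F hFc
          (fun z hz => le_of_eq (hz l₀))
      have hex : ∃ m ∈ Finset.Icc 1 (d + 1), ∀ l, j l ≠ m := by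
        by_contra h
        push_neg at h
        have hsub : Finset.Icc 1 (d + 1) ⊆ Finset.image j Finset.univ := by
          intro m hm
          obtain ⟨l, hl⟩ := h m hm
          exact Finset.mem_image.mpr ⟨l, Finset.mem_univ l, hl⟩
        have h1 := Finset.card_le_card hsub
        have h2 := Finset.card_image_le (s := Finset.univ) (f := j)
        simp [Nat.card_Icc] at h1 h2
        omega
      obtain ⟨m, hm, hmr⟩ := hex
      rw [Finset.mem_Icc] at hm
      obtain ⟨y, hyF, hymin⟩ := hFcompact.exists_isMinOn ⟨x, hxF⟩
        (continuous_powSum m).continuousOn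
      exact ⟨m, by omega, hmr, by omega, y, hyF, hymin⟩
    · push_neg at hev
      have h2r : ∀ l, j l ≠ 2 := fun l h => hev l (h ▸ even_two)
      set K := F ∩ {z : Fin n → ℝ | ∑ i, z i ^ 2 ≤ ∑ i, x i ^ 2} with hK
      have hKc : IsClosed K := hFc.inter (isClosed_le (continuous_powSum 2) continuous_const)
      have hKcompact : IsCompact K :=
        isCompact_of_even_powSum_bounded 2 even_two two_pos (∑ i, x i ^ 2) K hKc
          (fun z hz => hz.2)
      have hxK : x ∈ K := ⟨hxF, show (∑ i, x i ^ 2) ≤ ∑ i, x i ^ 2 from le_rfl⟩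
      obtain ⟨y, hyK, hymin⟩ := hKcompact.exists_isMinOn ⟨x, hxK⟩
        (continuous_powSum 2).continuousOn
      refine ⟨2, two_pos, h2r, by omega, y, hyK.1, ?_⟩
      intro z hz
      by_cases hz2 : ∑ i, z i ^ 2 ≤ ∑ i, x i ^ 2
      · exact hymin ⟨hz, hz2⟩
      · exact le_trans (hymin hxK) (le_of_lt (not_le.mp hz2))
  obtain ⟨m, hm0, hmr, hmJ, y, hyF, hymin⟩ := hkey
  -- Lagrange multipliers
  have hset : {z : Fin n → ℝ | ∀ l, (fun z : Fin n → ℝ => ∑ i, z i ^ j l) z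
      = (fun z : Fin n → ℝ => ∑ i, z i ^ j l) y} = F := by
    ext z
    constructor
    · intro hz l
      have h := hz l
      simp only [] at h
      rw [h]; exact hyF l
    · intro hz l
      show (∑ i, z i ^ j l) = ∑ i, y i ^ j l
      rw [hz l, hyF l]
  have hextr : IsLocalExtrOn (fun z : Fin n → ℝ => ∑ i, z i ^ m)
      {z : Fin n → ℝ | ∀ l, (fun z : Fin n → ℝ => ∑ i, z i ^ j l) z
        = (fun z : Fin n → ℝ => ∑ i, z i ^ j l) y} y := by
    rw [hset]
    exact Or.inl hymin.localize
  obtain ⟨Λ, Λ₀, hne, hsum⟩ := hextr.exists_multipliers_of_hasStrictFDerivAt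
    (f' := fun l => ∑ i, ((j l : ℝ) * y i ^ (j l - 1)) •
      ContinuousLinearMap.proj (R := ℝ) (φ := fun _ : Fin n => ℝ) i)
    (φ' := ∑ i, ((m : ℝ) * y i ^ (m - 1)) •
      ContinuousLinearMap.proj (R := ℝ) (φ := fun _ : Fin n => ℝ) i)
    (fun l => hasStrictFDerivAt_powSum (j l) y) (hasStrictFDerivAt_powSum m y)
  -- pointwise equations
  have heq : ∀ i₀ : Fin n,
      ∑ l, Λ l * ((j l : ℝ) * y i₀ ^ (j l - 1)) + Λ₀ * ((m : ℝ) * y i₀ ^ (m - 1)) = 0 := by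
    intro i₀
    have h := ContinuousLinearMap.ext_iff.mp hsum (Pi.single i₀ 1)
    rw [ContinuousLinearMap.add_apply, ContinuousLinearMap.zero_apply,
      ContinuousLinearMap.sum_apply] at h
    simp only [ContinuousLinearMap.smul_apply, clm_powSum_apply_single, smul_eq_mul] at h
    exact h
  -- build the polynomial
  set q : ℝ[X] := (∑ l, C (Λ l * (j l : ℝ)) * X ^ (j l - 1)) + C (Λ₀ * (m : ℝ)) * X ^ (m - 1)
    with hq
  have hqeval : ∀ t : ℝ, q.eval t
      = ∑ l, Λ l * ((j l : ℝ) * t ^ (j l - 1)) + Λ₀ * ((m : ℝ) * t ^ (m - 1)) := by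
    intro t
    simp [hq, Polynomial.eval_finset_sum, mul_assoc]
  have hqroot : ∀ i₀ : Fin n, q.eval (y i₀) = 0 := fun i₀ => (hqeval (y i₀)).trans (heq i₀)
  -- q ≠ 0
  have hexp_ne : ∀ l : Fin d, j l - 1 ≠ m - 1 := by
    intro l h
    have h1 := hpos l
    have := hmr l
    omega
  have hexp_inj : ∀ l l' : Fin d, j l - 1 = j l' - 1 → l = l' := by
    intro l l' h
    have h1 := hpos l
    have h2 := hpos l'
    exact hmono.injective (by omega)
  have hcoeffm : q.coeff (m - 1) = Λ₀ * m := by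
    rw [hq, Polynomial.coeff_add, Polynomial.finset_sum_coeff]
    rw [Finset.sum_eq_zero, zero_add]
    · rw [Polynomial.coeff_C_mul, Polynomial.coeff_X_pow, if_pos rfl, mul_one]
    · intro l _
      rw [Polynomial.coeff_C_mul, Polynomial.coeff_X_pow, if_neg (fun h => hexp_ne l h.symm),
        mul_zero]
  have hcoeffl : ∀ l₀ : Fin d, q.coeff (j l₀ - 1) = Λ l₀ * (j l₀ : ℝ) := by
    intro l₀
    rw [hq, Polynomial.coeff_add, Polynomial.finset_sum_coeff]
    rw [Finset.sum_eq_single l₀]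
    · rw [Polynomial.coeff_C_mul, Polynomial.coeff_X_pow, if_pos rfl, mul_one,
        Polynomial.coeff_C_mul, Polynomial.coeff_X_pow, if_neg (hexp_ne l₀), mul_zero, add_zero]
    · intro l _ hl
      rw [Polynomial.coeff_C_mul, Polynomial.coeff_X_pow,
        if_neg (fun h => hl (hexp_inj l₀ l h).symm), mul_zero]
    · intro h; exact absurd (Finset.mem_univ l₀) h
  have hqne : q ≠ 0 := by
    intro h
    apply hne
    have hΛ₀ : Λ₀ = 0 := by
      have := hcoeffm
      rw [h, Polynomial.coeff_zero] at this
      have hm' : (m : ℝ) ≠ 0 := Nat.cast_ne_zero.mpr (by omega)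
      exact (mul_eq_zero.mp this.symm).resolve_right hm'
    have hΛ : Λ = 0 := by
      funext l
      have := hcoeffl l
      rw [h, Polynomial.coeff_zero] at this
      have hj' : ((j l : ℕ) : ℝ) ≠ 0 := Nat.cast_ne_zero.mpr (by have := hpos l; omega)
      exact (mul_eq_zero.mp this.symm).resolve_right hj'
    rw [hΛ, hΛ₀]
    rfl
  -- support bound
  have hsupp : q.support.card ≤ d + 1 := by
    have hsub : q.support ⊆ (Finset.image (fun l => j l - 1) Finset.univ) ∪ {m - 1} := by
      intro e he
      rw [Polynomial.mem_support_iff] at he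
      by_contra hmem
      apply he
      rw [hq, Polynomial.coeff_add, Polynomial.finset_sum_coeff]
      rw [Finset.mem_union, Finset.mem_singleton, Finset.mem_image] at hmem
      push_neg at hmem
      rw [Finset.sum_eq_zero, Polynomial.coeff_C_mul, Polynomial.coeff_X_pow,
        if_neg hmem.2, mul_zero, zero_add]
      intro l _
      rw [Polynomial.coeff_C_mul, Polynomial.coeff_X_pow,
        if_neg (fun h => hmem.1 l (Finset.mem_univ l) h.symm), mul_zero]
    calc q.support.card ≤ _ := Finset.card_le_card hsub
      _ ≤ (Finset.image (fun l => j l - 1) Finset.univ).card + 1 := by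
          refine le_trans (Finset.card_union_le _ _) ?_
          simp
      _ ≤ d + 1 := by
          have := Finset.card_image_le (s := (Finset.univ : Finset (Fin d)))
            (f := fun l => j l - 1)
          simp at this
          omega
  -- degree bound
  have hdeg : q.natDegree ≤ J := by
    rw [hq]
    refine le_trans (Polynomial.natDegree_add_le _ _) ?_
    rw [max_le_iff]
    constructor
    · refine le_trans (Polynomial.natDegree_sum_le _ _) ?_
      rw [Finset.fold_max_le]
      refine ⟨by omega, ?_⟩
      intro l _
      refine le_trans (Polynomial.natDegree_C_mul_X_pow_le _ _) ?_
      have := hjJ l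
      omega
    · refine le_trans (Polynomial.natDegree_C_mul_X_pow_le _ _) ?_
      omega
  -- count distinct coordinates
  set T : Finset ℝ := Finset.image y Finset.univ with hT
  have hTroot : ∀ r ∈ T, q.eval r = 0 := by
    intro r hr
    obtain ⟨i₀, _, rfl⟩ := Finset.mem_image.mp hr
    exact hqroot i₀
  obtain ⟨hc1, hc2⟩ := root_finset_card_le q hqne (d + 1) hsupp T hTroot
  have hrange : Set.range y = ↑T := by
    rw [hT, Finset.coe_image, Finset.coe_univ, Set.image_univ]
  refine ⟨y, hclosed x hx y hyF, ?_⟩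
  rw [hrange, Set.ncard_coe_finset]
  refine le_min (le_trans hc1 hdeg) (by omega)
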